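/- Fix ρ ∈ (0,1], P_e ∈ (0,1), a finite index set I, nonnegative weights w_i for i ∈ I with Σ_{i∈I} w_i·φ_i > 0, and positive quanta φ_i > 0 for i ∈ I. For each positive integer M let S(M) = −ln P_e + ρ·ln M and g(M) = Σ_{i∈I} w_i·φ_i·(ln M)/⌈S(M)⌉_{φ_i}. Then for every positive integer M¹ there exists a positive integer M² > M¹ such that g(M²) > g(M¹). -/

import Mathlib

/-- `qceil x q` is the smallest positive integer multiple of `q` that is at least `x`,
i.e. `min {n*q : n ∈ ℤ, n ≥ 1, x ≤ n*q}`. -/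
noncomputable def qceil (x q : ℝ) : ℝ := q * ((max 1 ⌈x / q⌉ : ℤ) : ℝ)

lemma qceil_eq (x q : ℝ) (hx : 0 < x) (hq : 0 < q) :
    qceil x q = q * (⌈x / q⌉ : ℝ) := by
  have h1 : (1 : ℤ) ≤ ⌈x / q⌉ := Int.ceil_pos.mpr (div_pos hx hq)
  simp [qceil, max_eq_right h1]

lemma qceil_ge (x q : ℝ) (hx : 0 < x) (hq : 0 < q) : x ≤ qceil x q := by
  rw [qceil_eq x q hx hq]
  have := Int.le_ceil (x / q)
  calc x = q * (x / q) := by field_simp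
    _ ≤ q * (⌈x / q⌉ : ℝ) := by
        exact mul_le_mul_of_nonneg_left this hq.le

lemma qceil_lt (x q : ℝ) (hx : 0 < x) (hq : 0 < q) : qceil x q < x + q := by
  rw [qceil_eq x q hx hq]
  have := Int.ceil_lt_add_one (x / q)
  calc q * (⌈x / q⌉ : ℝ) < q * (x / q + 1) := by
        exact mul_lt_mul_of_pos_left this hq
    _ = x + q := by field_simp

lemma aux_div_tendsto (ρ a : ℝ) (hρ : 0 < ρ) :
    Filter.Tendsto (fun x : ℝ => x / (a + ρ * x)) Filter.atTop (nhds ρ⁻¹) := by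
  have h0 : Filter.Tendsto (fun x : ℝ => a / x) Filter.atTop (nhds 0) :=
    Filter.Tendsto.div_atTop tendsto_const_nhds Filter.tendsto_id
  have h1 : Filter.Tendsto (fun x : ℝ => a / x + ρ) Filter.atTop (nhds ρ) := by
    simpa using h0.add (tendsto_const_nhds (x := ρ))
  have h2 := h1.inv₀ (ne_of_gt hρ)
  refine h2.congr' ?_
  filter_upwards [Filter.eventually_gt_atTop (0 : ℝ)] with x hx
  rw [div_add' _ _ _ (ne_of_gt hx), inv_div]

/-- Monotonicity part of the capacity-interpretation corollary for state-independent
scheduling policies: the nat arrival rate threshold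
`g(M) = Σ_i w_i·φ_i·(ln M)/⌈S(M)⌉_{φ_i}` increases with the message alphabet size. -/
theorem stmt9 (ρ Pe : ℝ) (hρ : ρ ∈ Set.Ioc (0 : ℝ) 1) (hPe : Pe ∈ Set.Ioo (0 : ℝ) 1)
    (I : Type*) [Fintype I] (w φ : I → ℝ) (hw : ∀ i, 0 ≤ w i) (hφ : ∀ i, 0 < φ i)
    (hpos : 0 < ∑ i, w i * φ i) :
    let S : ℕ → ℝ := fun M => -Real.log Pe + ρ * Real.log M
    let g : ℕ → ℝ := fun M => ∑ i, w i * φ i * Real.log M / qceil (S M) (φ i)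
    ∀ M₁ : ℕ, 0 < M₁ → ∃ M₂ : ℕ, M₁ < M₂ ∧ g M₁ < g M₂ := by
  intro S g M₁ hM₁
  obtain ⟨hρ0, hρ1⟩ := hρ
  obtain ⟨hPe0, hPe1⟩ := hPe
  have hc : 0 < -Real.log Pe := by
    have := Real.log_neg hPe0 hPe1; linarith
  have hlognn : ∀ M : ℕ, 1 ≤ M → 0 ≤ Real.log M := by
    intro M hM
    exact Real.log_nonneg (by exact_mod_cast hM)
  have hS : ∀ M : ℕ, 1 ≤ M → 0 < S M := by
    intro M hM
    have := hlognn M hM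
    have : 0 ≤ ρ * Real.log M := mul_nonneg hρ0.le this
    simp only [S]; linarith
  have hL : Filter.Tendsto (fun M : ℕ => Real.log M) Filter.atTop Filter.atTop :=
    Real.tendsto_log_atTop.comp tendsto_natCast_atTop_atTop
  -- each term tends to w i * φ i / ρ
  have hterm : ∀ i, Filter.Tendsto
      (fun M : ℕ => w i * φ i * Real.log M / qceil (S M) (φ i))
      Filter.atTop (nhds (w i * φ i / ρ)) := by
    intro i
    have hwφ : 0 ≤ w i * φ i := mul_nonneg (hw i) (hφ i).le
    have hlow : Filter.Tendsto
        (fun M : ℕ => w i * φ i * (Real.log M / (S M + φ i)))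
        Filter.atTop (nhds (w i * φ i * ρ⁻¹)) := by
      have := ((aux_div_tendsto ρ (-Real.log Pe + φ i) hρ0).comp hL).const_mul (w i * φ i)
      refine this.congr ?_
      intro M
      simp only [Function.comp, S]
      ring_nf
    have hup : Filter.Tendsto
        (fun M : ℕ => w i * φ i * (Real.log M / (S M)))
        Filter.atTop (nhds (w i * φ i * ρ⁻¹)) := by
      have := ((aux_div_tendsto ρ (-Real.log Pe) hρ0).comp hL).const_mul (w i * φ i)
      refine this.congr ?_
      intro M
      simp only [Function.comp, S]
    have key : w i * φ i / ρ = w i * φ i * ρ⁻¹ := by rw [div_eq_mul_inv]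
    rw [key]
    refine tendsto_of_tendsto_of_tendsto_of_le_of_le' hlow hup ?_ ?_
    · filter_upwards [Filter.eventually_ge_atTop 1] with M hM
      have hSM := hS M hM
      have hQ1 := qceil_ge (S M) (φ i) hSM (hφ i)
      have hQ2 := qceil_lt (S M) (φ i) hSM (hφ i)
      have hQ0 : 0 < qceil (S M) (φ i) := lt_of_lt_of_le hSM hQ1
      have hnum : 0 ≤ w i * φ i * Real.log M := mul_nonneg hwφ (hlognn M hM)
      rw [mul_div_assoc]
      gcongr
    · filter_upwards [Filter.eventually_ge_atTop 1] with M hM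
      have hSM := hS M hM
      have hQ1 := qceil_ge (S M) (φ i) hSM (hφ i)
      have hnum : 0 ≤ w i * φ i * Real.log M := mul_nonneg hwφ (hlognn M hM)
      rw [mul_div_assoc]
      gcongr
  have hT : Filter.Tendsto g Filter.atTop (nhds (∑ i, w i * φ i / ρ)) := by
    simpa [g] using tendsto_finset_sum Finset.univ (fun i _ => hterm i)
  -- g M₁ < C
  have hglt : g M₁ < ∑ i, w i * φ i / ρ := by
    have hCpos : 0 < ∑ i, w i * φ i / ρ := by
      rw [← Finset.sum_div]
      exact div_pos hpos hρ0
    rcases eq_or_lt_of_le (show 1 ≤ M₁ from hM₁) with h1 | h2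
    · -- M₁ = 1
      have : M₁ = 1 := h1.symm
      subst this
      have : g 1 = 0 := by
        simp [g, Real.log_one]
      rw [this]; exact hCpos
    · -- M₁ ≥ 2
      have hM2 : (2 : ℕ) ≤ M₁ := h2
      have hlogpos : 0 < Real.log M₁ :=
        Real.log_pos (by exact_mod_cast lt_of_lt_of_le one_lt_two hM2)
      obtain ⟨i₀, hi₀⟩ : ∃ i, 0 < w i * φ i := by
        by_contra hcon
        push_neg at hcon
        have : ∑ i, w i * φ i ≤ 0 := Finset.sum_nonpos (fun i _ => hcon i)
        linarith
      have hSM := hS M₁ hM₁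
      have hρlog : 0 < ρ * Real.log M₁ := mul_pos hρ0 hlogpos
      have hSgt : ρ * Real.log M₁ < S M₁ := by simp only [S]; linarith
      refine Finset.sum_lt_sum (fun i _ => ?_) ⟨i₀, Finset.mem_univ i₀, ?_⟩
      · have hwφ : 0 ≤ w i * φ i := mul_nonneg (hw i) (hφ i).le
        have hQ1 := qceil_ge (S M₁) (φ i) hSM (hφ i)
        have hQ0 : 0 < qceil (S M₁) (φ i) := lt_of_lt_of_le hSM hQ1
        have step : w i * φ i * Real.log M₁ / qceil (S M₁) (φ i)
            ≤ w i * φ i * Real.log M₁ / (ρ * Real.log M₁) := by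
          gcongr
          all_goals first | exact mul_nonneg hwφ hlogpos.le | linarith
        calc w i * φ i * Real.log M₁ / qceil (S M₁) (φ i)
            ≤ w i * φ i * Real.log M₁ / (ρ * Real.log M₁) := step
          _ = w i * φ i / ρ := by
              field_simp
      · have hQ1 := qceil_ge (S M₁) (φ i₀) hSM (hφ i₀)
        have hnum : 0 < w i₀ * φ i₀ * Real.log M₁ := mul_pos hi₀ hlogpos
        have step : w i₀ * φ i₀ * Real.log M₁ / qceil (S M₁) (φ i₀)
            < w i₀ * φ i₀ * Real.log M₁ / (ρ * Real.log M₁) := by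
          apply div_lt_div_of_pos_left hnum hρlog
          linarith
        calc w i₀ * φ i₀ * Real.log M₁ / qceil (S M₁) (φ i₀)
            < w i₀ * φ i₀ * Real.log M₁ / (ρ * Real.log M₁) := step
          _ = w i₀ * φ i₀ / ρ := by
              field_simp
  have hEv : ∀ᶠ M in Filter.atTop, g M₁ < g M :=
    hT.eventually (eventually_gt_nhds hglt)
  obtain ⟨M₂, hM₂a, hM₂b⟩ := (hEv.and (Filter.eventually_gt_atTop M₁)).exists
  exact ⟨M₂, hM₂b, hM₂a⟩
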